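/- Let n ≥ 1 and 1 ≤ σ ≤ n be natural numbers. Let f : Fin n → Fin n be a bijection, and let s : Fin n → Fin σ be a monotone (nondecreasing) surjective function (assigning each k-mer index to its string). Define A = { i : 1 ≤ i ≤ n − 1, s(i) = s(i+1) and f(i+1) = f(i) + 1 }. Then |A| ≤ n − σ; consequently, with ε = 1 − |A|/n and α = (σ − 1)/n, one has ε ≥ α + 1/n. -/

import Mathlib

/-- Section 2 of the paper: `ε ≥ α + 1/n`: let `f : Fin n → Fin n` be
a bijection (a MPHF on the `n` k-mers) and `s : Fin n → Fin σ` a monotone surjection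
(assigning each k-mer index to its string, `σ = |S|`). If `A` is the set of indices
`i` such that `i` and `i+1` lie in the same string and `f(i+1) = f(i) + 1`, then
`|A| ≤ n − σ`; consequently `ε = 1 − |A|/n` satisfies `ε ≥ α + 1/n` where
`α = (σ − 1)/n` is the fragmentation factor. -/
theorem epsilon_ge_alpha_plus_inv_n (n σ : ℕ) (hσ1 : 1 ≤ σ) (hσn : σ ≤ n)
    (f : Fin n → Fin n) (hf : Function.Bijective f)
    (s : Fin n → Fin σ) (hmono : Monotone s) (hsurj : Function.Surjective s)
    (A : Finset (Fin n))
    (hA : ∀ i : Fin n, i ∈ A ↔ ∃ h : (i : ℕ) + 1 < n,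
      s i = s ⟨(i : ℕ) + 1, h⟩ ∧ (f ⟨(i : ℕ) + 1, h⟩ : ℕ) = (f i : ℕ) + 1) :
    A.card ≤ n - σ ∧
    1 - (A.card : ℝ) / n ≥ ((σ : ℝ) - 1) / n + 1 / n := by
  classical
  have hn1 : 1 ≤ n := le_trans hσ1 hσn
  -- B: indices where the string changes
  set B : Finset (Fin n) :=
    Finset.univ.filter (fun i => ∃ h : (i : ℕ) + 1 < n, s i ≠ s ⟨(i : ℕ) + 1, h⟩) with hB
  -- the "interior" indices
  set C : Finset (Fin n) := Finset.univ.filter (fun i => (i : ℕ) + 1 < n) with hC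
  -- card of C is n - 1
  obtain ⟨m, rfl⟩ : ∃ m, n = m + 1 := ⟨n - 1, by omega⟩
  have hCcard : C.card = m := by
    have : C = Finset.univ.erase (Fin.last m) := by
      ext i
      simp only [hC, Finset.mem_filter, Finset.mem_univ, true_and, Finset.mem_erase]
      constructor
      · intro h
        refine ⟨fun he => ?_, trivial⟩
        rw [he] at h; simp [Fin.last] at h
      · intro ⟨h, _⟩
        have := i.isLt
        have : (i : ℕ) ≠ m := fun he => h (Fin.ext he)
        omega
    rw [this, Finset.card_erase_of_mem (Finset.mem_univ _)]
    simp
  -- B has at least σ - 1 elements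
  -- construct for each j with j+1 < σ a change-index
  have hBge : σ - 1 ≤ B.card := by
    -- for each j : Fin σ with (j:ℕ)+1 < σ, pick max index with s i = j
    have hne : ∀ j : Fin σ, (Finset.univ.filter (fun i => s i = j)).Nonempty := by
      intro j
      obtain ⟨i, hi⟩ := hsurj j
      exact ⟨i, by simp [hi]⟩
    set g : Fin σ → Fin (m+1) := fun j => (Finset.univ.filter (fun i => s i = j)).max' (hne j)
      with hg
    have hgs : ∀ j, s (g j) = j := by
      intro j
      have := Finset.max'_mem _ (hne j)
      simpa using this
    have hgmax : ∀ j (i : Fin (m+1)), s i = j → i ≤ g j := by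
      intro j i hi
      exact Finset.le_max' _ i (by simp [hi])
    set T : Finset (Fin σ) := Finset.univ.filter (fun j => (j : ℕ) + 1 < σ) with hT
    have hTcard : T.card = σ - 1 := by
      obtain ⟨p, rfl⟩ : ∃ p, σ = p + 1 := ⟨σ - 1, by omega⟩
      have : T = Finset.univ.erase (Fin.last p) := by
        ext j
        simp only [hT, Finset.mem_filter, Finset.mem_univ, true_and, Finset.mem_erase]
        constructor
        · intro h
          refine ⟨fun he => ?_, trivial⟩
          rw [he] at h; simp [Fin.last] at h
        · intro ⟨h, _⟩
          have := j.isLt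
          have : (j : ℕ) ≠ p := fun he => h (Fin.ext he)
          omega
      rw [this, Finset.card_erase_of_mem (Finset.mem_univ _)]
      simp
    have hmaps : ∀ j ∈ T, g j ∈ B := by
      intro j hj
      simp only [hT, Finset.mem_filter, Finset.mem_univ, true_and] at hj
      -- j+1 exists in Fin σ
      set j' : Fin σ := ⟨(j : ℕ) + 1, hj⟩ with hj'
      obtain ⟨i', hi'⟩ := hsurj j'
      have hgi' : g j < i' := by
        by_contra hle
        push_neg at hle
        have h1 : s i' ≤ s (g j) := hmono hle
        rw [hi', hgs] at h1
        have : (j:ℕ) + 1 ≤ (j:ℕ) := h1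
        omega
      have hlt : (g j : ℕ) + 1 < m + 1 := by
        have := i'.isLt
        omega
      simp only [hB, Finset.mem_filter, Finset.mem_univ, true_and]
      refine ⟨hlt, fun heq => ?_⟩
      -- s (g j + 1) = j, contradicting maximality
      have : (⟨(g j : ℕ) + 1, hlt⟩ : Fin (m+1)) ≤ g j := by
        apply hgmax j
        rw [← heq, hgs]
      simp [Fin.le_def] at this
    have hinj : Set.InjOn g T := by
      intro a _ b _ hab
      have : s (g a) = s (g b) := by rw [hab]
      rwa [hgs, hgs] at this
    calc σ - 1 = T.card := hTcard.symm
      _ ≤ B.card := Finset.card_le_card_of_injOn g hmaps hinj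
  -- A and B are disjoint, both inside C
  have hdisj : Disjoint A B := by
    rw [Finset.disjoint_left]
    intro i hiA hiB
    rw [hA] at hiA
    obtain ⟨h, hs, _⟩ := hiA
    simp only [hB, Finset.mem_filter, Finset.mem_univ, true_and] at hiB
    obtain ⟨h', hs'⟩ := hiB
    exact hs' hs
  have hsub : A ∪ B ⊆ C := by
    intro i hi
    simp only [hC, Finset.mem_filter, Finset.mem_univ, true_and]
    rcases Finset.mem_union.mp hi with h | h
    · rw [hA] at h; exact h.1
    · simp only [hB, Finset.mem_filter, Finset.mem_univ, true_and] at h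
      exact h.1
  have hcards : A.card + B.card ≤ m := by
    rw [← Finset.card_union_of_disjoint hdisj]
    calc (A ∪ B).card ≤ C.card := Finset.card_le_card hsub
      _ = m := hCcard
  have hAcard : A.card ≤ m + 1 - σ := by omega
  refine ⟨hAcard, ?_⟩
  have hn : (0 : ℝ) < (m + 1 : ℕ) := by positivity
  rw [ge_iff_le, ← add_div, sub_add_cancel, le_sub_iff_add_le, ← add_div,
    div_le_one hn]
  have : A.card + σ ≤ m + 1 := by omega
  exact_mod_cast (by omega : σ + A.card ≤ m + 1)
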